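/- Let C be a set, H := ℓ²(C), H_k := ℓ²(C^k), and let O(H) act on each H_k via the natural continuous extension of the diagonal tensor-power action g ↦ g^{⊗k}. Then the partition function is O(H)-invariant: for every g ∈ O(H), every h = (h_k)_k ∈ ∏_{k∈ℕ} B_k, and every finite simple graph F, π(g·h)(F) = π(h)(F), where g·h := (g·h_k)_k. -/

import Mathlib

set_option maxHeartbeats 1600000


open scoped InnerProductSpace
open Filter

noncomputable section

/-- `ℓ²(C)`, the real Hilbert space of square-summable functions `C → ℝ`. -/
abbrev l2 (C : Type) : Type := lp (fun _ : C => ℝ) 2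

/-- `H_k = ℓ²(C^k)`. -/
abbrev Hk (C : Type) (k : ℕ) : Type := lp (fun _ : (Fin k → C) => ℝ) 2

/-- `S_k`-invariance of an element of `H_k = ℓ²(C^k)` (for the action of `S_k` permuting
the coordinates of `C^k`). -/
def SkInv {C : Type} {k : ℕ} (h : Hk C k) : Prop :=
  ∀ (σ : Equiv.Perm (Fin k)) (c : Fin k → C), h (c ∘ σ) = h c

/-- `B_k`, the closed unit ball of the subspace `H_k^{S_k}` of `S_k`-invariant elements. -/
def Bk (C : Type) (k : ℕ) : Set (Hk C k) := {x | SkInv x ∧ ‖x‖ ≤ 1}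

/-- `R_k`, the set of elementary tensors `r₁ ⊗ ⋯ ⊗ r_k` with each `rᵢ` in the closed unit
ball of `ℓ²(C)`. -/
def Rk (C : Type) (k : ℕ) : Set (Hk C k) :=
  {x | ∃ r : Fin k → l2 C, (∀ i, ‖r i‖ ≤ 1) ∧ ∀ c : Fin k → C, x c = ∏ i, r i (c i)}

/-- The seminorm `‖x‖_R = sup_{r ∈ R} |⟨r,x⟩|`. -/
def normR {H : Type*} [NormedAddCommGroup H] [InnerProductSpace ℝ H] (R : Set H) (x : H) : ℝ :=
  ⨆ r : R, |⟪(r : H), x⟫_ℝ|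

/-- The pseudometric `d_R(x,y) = ‖x - y‖_R`. -/
def dR {H : Type*} [NormedAddCommGroup H] [InnerProductSpace ℝ H] (R : Set H) (x y : H) : ℝ :=
  normR R (x - y)

/-- The topology induced by a pseudometric `d` : the one generated by the open balls of `d`. -/
def ballTopology {X : Type*} (d : X → X → ℝ) : TopologicalSpace X :=
  TopologicalSpace.generateFrom {s | ∃ x ε, 0 < ε ∧ s = {y | d x y < ε}}

/-- `δ` enumerates, for each vertex `v`, the edges of `F` incident with `v` (in some order). -/
def IsEnum {V : Type} [Fintype V] [DecidableEq V] (F : SimpleGraph V) [DecidableRel F.Adj]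
    (δ : ∀ v : V, Fin (F.degree v) → F.edgeSet) : Prop :=
  ∀ v : V, Function.Injective (δ v) ∧
    ∀ e : F.edgeSet, v ∈ (e : Sym2 V) ↔ e ∈ Set.range (δ v)

/-- The partition function `π_F(h) = Σ_{φ : E(F) → C} ∏_{v ∈ V(F)} h_v(φ(δ(v)))`. -/
def piF {C V : Type} [Fintype V] [DecidableEq V] (F : SimpleGraph V) [DecidableRel F.Adj]
    (δ : ∀ v : V, Fin (F.degree v) → F.edgeSet)
    (h : ∀ v : V, Hk C (F.degree v)) : ℝ :=
  ∑' φ : F.edgeSet → C, ∏ v : V, h v (fun i => φ (δ v i))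

/-- `act` is the natural action of `O(H) = O(ℓ²(C))` on the spaces `H_k = ℓ²(C^k)`:
the (unique) continuous linear extension of the diagonal tensor-power action
`g^{⊗k}`, i.e. it sends each elementary tensor `r₁ ⊗ ⋯ ⊗ r_k` to `(g r₁) ⊗ ⋯ ⊗ (g r_k)`. -/
def IsTensorPowerAction {C : Type}
    (act : (l2 C ≃ₗᵢ[ℝ] l2 C) → ∀ k : ℕ, Hk C k ≃ₗᵢ[ℝ] Hk C k) : Prop :=
  ∀ (g : l2 C ≃ₗᵢ[ℝ] l2 C) (k : ℕ) (r : Fin k → l2 C) (x : Hk C k),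
    (∀ c : Fin k → C, x c = ∏ i, r i (c i)) →
    ∀ c : Fin k → C, (act g k x) c = ∏ i, (g (r i)) (c i)

/-! ### Auxiliary lemmas for the proof of `stmt15` -/

open scoped ENNReal NNReal
open MeasureTheory

section AuxLemmas

lemma tsum_cs' {α : Type*} (f g : α → ℝ≥0∞) :
    ∑' a, f a * g a ≤ (∑' a, f a ^ 2) ^ (2⁻¹ : ℝ) * (∑' a, g a ^ 2) ^ (2⁻¹ : ℝ) := by
  letI : MeasurableSpace α := ⊤
  have hpq : (2 : ℝ).HolderConjugate 2 := Real.HolderConjugate.two_two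
  have h := ENNReal.lintegral_mul_le_Lp_mul_Lq (Measure.count (α := α)) hpq
    (measurable_from_top (f := f)).aemeasurable (measurable_from_top (f := g)).aemeasurable
  have hc : ∀ F : α → ℝ≥0∞, ∫⁻ a, F a ∂Measure.count = ∑' a, F a := by
    intro F
    exact lintegral_count' measurable_from_top
  simp only [Pi.mul_apply] at h
  rw [hc, hc, hc] at h
  have e2 : ∀ x : ℝ≥0∞, x ^ (2 : ℝ) = x ^ (2 : ℕ) := fun x => by
    rw [← ENNReal.rpow_natCast]; norm_num
  simpa [e2, one_div] using h

lemma rpow_inv_sq' (y : ℝ≥0∞) : (y ^ (2⁻¹ : ℝ)) ^ (2 : ℕ) = y := by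
  rw [← ENNReal.rpow_natCast (y ^ (2⁻¹ : ℝ)) 2, ← ENNReal.rpow_mul]
  norm_num

lemma sq_rpow_inv' (y : ℝ≥0∞) : (y ^ (2 : ℕ)) ^ (2⁻¹ : ℝ) = y := by
  rw [← ENNReal.rpow_natCast y 2, ← ENNReal.rpow_mul]
  norm_num

end AuxLemmas

/-- Empty-edge case of the core inequality. -/
lemma core_empty (C E V : Type) [IsEmpty E] [Fintype V]
    (I : V → Type) (δ : ∀ v, I v → E) (x : ∀ v, (I v → C) → ℝ≥0∞) :
    ∑' ψ : E → C, ∏ v, x v (fun i => ψ (δ v i)) ≤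
      ∏ v, (∑' c : I v → C, (x v c) ^ (2:ℕ)) ^ (2⁻¹ : ℝ) := by
  haveI : ∀ v, IsEmpty (I v) := fun v => Function.isEmpty (δ v)
  haveI : Unique (E → C) := Pi.uniqueOfIsEmpty _
  have h1 : ∑' ψ : E → C, ∏ v, x v (fun i => ψ (δ v i)) =
      ∏ v, x v (fun i => (default : E → C) (δ v i)) := tsum_eq_single _ (fun ψ hψ =>
        absurd (Subsingleton.elim ψ default) hψ)
  rw [h1]
  refine le_of_eq (Finset.prod_congr rfl (fun v _ => ?_))
  haveI : Unique (I v → C) := Pi.uniqueOfIsEmpty _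
  have h2 : ∑' c : I v → C, (x v c) ^ (2:ℕ) = (x v default) ^ (2:ℕ) :=
    tsum_eq_single _ (fun c hc => absurd (Subsingleton.elim c default) hc)
  rw [h2, sq_rpow_inv']
  exact congrArg (x v) (Subsingleton.elim _ _)

/-- The core inequality (generalized Cauchy–Schwarz / Finner inequality for graphs):
if the darts `Σ v, I v` are matched two-to-one onto the edges `E`, with the two darts
of each edge at distinct vertices, then
`∑_ψ ∏_v x v (ψ ∘ δ v) ≤ ∏_v ‖x v‖₂`. -/
lemma core (C : Type) : ∀ (n : ℕ) (E V : Type) [Fintype E] [Fintype V]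
    (I : V → Type) (δ : ∀ v, I v → E) (x : ∀ v, (I v → C) → ℝ≥0∞)
    (b : E ⊕ E ≃ (Σ v, I v)),
    (∀ e : E, δ (b (.inl e)).1 (b (.inl e)).2 = e) →
    (∀ e : E, δ (b (.inr e)).1 (b (.inr e)).2 = e) →
    (∀ e : E, (b (.inl e)).1 ≠ (b (.inr e)).1) →
    Fintype.card E ≤ n →
    ∑' ψ : E → C, ∏ v, x v (fun i => ψ (δ v i)) ≤
      ∏ v, (∑' c : I v → C, (x v c) ^ (2:ℕ)) ^ (2⁻¹ : ℝ) := by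
  intro n
  induction n with
  | zero =>
    intro E V _ _ I δ x b hbl hbr hne hcard
    haveI : IsEmpty E := Fintype.card_eq_zero_iff.mp (Nat.le_zero.mp hcard)
    exact core_empty C E V I δ x
  | succ n ih =>
    intro E V _ _ I δ x b hbl hbr hne hcard
    rcases isEmpty_or_nonempty E with hE | hE
    · exact core_empty C E V I δ x
    obtain ⟨e0⟩ := hE
    classical
    -- the two darts of `e0`
    set u : V := (b (.inl e0)).1 with hu
    set i0 : I u := (b (.inl e0)).2 with hi0
    set w : V := (b (.inr e0)).1 with hw
    set j0 : I w := (b (.inr e0)).2 with hj0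
    have huw : u ≠ w := hne e0
    -- classification of darts over `e0`
    have hclass : ∀ (v : V) (i : I v), δ v i = e0 →
        (⟨v, i⟩ : Σ v, I v) = b (.inl e0) ∨ (⟨v, i⟩ : Σ v, I v) = b (.inr e0) := by
      intro v i hvi
      cases hs : b.symm ⟨v, i⟩ with
      | inl e =>
        have hbe : b (.inl e) = ⟨v, i⟩ := by rw [← hs, Equiv.apply_symm_apply]
        have he : e = e0 := by
          have := congrArg (fun d : Σ v, I v => δ d.1 d.2) hbe
          simpa [hbl e, hvi] using this
        exact Or.inl (by rw [← hbe, he])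
      | inr e =>
        have hbe : b (.inr e) = ⟨v, i⟩ := by rw [← hs, Equiv.apply_symm_apply]
        have he : e = e0 := by
          have := congrArg (fun d : Σ v, I v => δ d.1 d.2) hbe
          simpa [hbr e, hvi] using this
        exact Or.inr (by rw [← hbe, he])
    have hbu : (⟨u, i0⟩ : Σ v, I v) = b (.inl e0) := Sigma.eta _
    have hbw : (⟨w, j0⟩ : Σ v, I v) = b (.inr e0) := Sigma.eta _
    have hδu : δ u i0 = e0 := hbl e0
    have hδw : δ w j0 = e0 := hbr e0
    -- if `v` carries a dart over `e0` then `v = u` or `v = w`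
    have hvert : ∀ (v : V) (i : I v), δ v i = e0 → v = u ∨ v = w := by
      intro v i hvi
      rcases hclass v i hvi with hd | hd
      · exact Or.inl (congrArg Sigma.fst (hd.trans hbu.symm))
      · exact Or.inr (congrArg Sigma.fst (hd.trans hbw.symm))
    -- uniqueness of the dart over `e0` at a fixed vertex
    have huniq : ∀ (v : V) (i i' : I v), δ v i = e0 → δ v i' = e0 → i = i' := by
      intro v i i' hi hi'
      rcases hclass v i hi with hd | hd <;> rcases hclass v i' hi' with hd' | hd'
      · have h2 := hd.trans hd'.symm
        exact eq_of_heq (Sigma.mk.inj_iff.mp h2).2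
      · have h1 : v = u := congrArg Sigma.fst (hd.trans hbu.symm)
        have h2 : v = w := congrArg Sigma.fst (hd'.trans hbw.symm)
        exact absurd (h1.symm.trans h2) huw
      · have h1 : v = u := congrArg Sigma.fst (hd'.trans hbu.symm)
        have h2 : v = w := congrArg Sigma.fst (hd.trans hbw.symm)
        exact absurd (h1.symm.trans h2) huw
      · have h2 := hd.trans hd'.symm
        exact eq_of_heq (Sigma.mk.inj_iff.mp h2).2
    -- the reduced edge set and dart sets
    let E' : Type := {e : E // e ≠ e0}
    have hcard' : Fintype.card E' ≤ n := by
      have hlt : Fintype.card E' < Fintype.card E :=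
        Fintype.card_subtype_lt (p := fun e => e ≠ e0) (x := e0) (by simp)
      omega
    let I' : V → Type := fun v => {i : I v // δ v i ≠ e0}
    let δ' : ∀ v, I' v → E' := fun v i => ⟨δ v i.1, i.2⟩
    -- reduced vertex functions
    let x' : ∀ v, (I' v → C) → ℝ≥0∞ := fun v c =>
      if hv : ∀ i : I v, δ v i ≠ e0 then x v (fun i => c ⟨i, hv i⟩)
      else (∑' c0 : C, (x v (fun i => if h : δ v i = e0 then c0 else c ⟨i, h⟩)) ^ (2:ℕ)) ^ (2⁻¹ : ℝ)
    have hvu : ¬ (∀ i : I u, δ u i ≠ e0) := fun hv => hv i0 hδu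
    have hvw : ¬ (∀ i : I w, δ w i ≠ e0) := fun hv => hv j0 hδw
    -- reduced dart matching
    let pack : ∀ (d : Σ v, I v), δ d.1 d.2 ≠ e0 → Σ v, I' v :=
      fun d h => ⟨d.1, ⟨d.2, h⟩⟩
    have pack_congr : ∀ (d d' : Σ v, I v) (h : δ d.1 d.2 ≠ e0) (h' : δ d'.1 d'.2 ≠ e0),
        d = d' → pack d h = pack d' h' := by
      rintro d d' h h' rfl; rfl
    have hlift : ∀ (d : Σ v, I v) (h : δ d.1 d.2 ≠ e0),
        (⟨(pack d h).1, (pack d h).2.1⟩ : Σ v, I v) = d := fun d h => Sigma.eta d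
    let f : E' ⊕ E' → Σ v, I' v := fun s =>
      match s with
      | .inl e => pack (b (.inl e.1)) (by rw [show δ (b (.inl e.1)).1 (b (.inl e.1)).2 = e.1 from hbl e.1]; exact e.2)
      | .inr e => pack (b (.inr e.1)) (by rw [show δ (b (.inr e.1)).1 (b (.inr e.1)).2 = e.1 from hbr e.1]; exact e.2)
    have hfinj : Function.Injective f := by
      intro s1 s2 hf
      have hf2 := congrArg (fun d : Σ v, I' v => (⟨d.1, d.2.1⟩ : Σ v, I v)) hf
      match s1, s2 with
      | .inl e1, .inl e2 =>
        have : b (.inl e1.1) = b (.inl e2.1) := by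
          simpa [f, hlift] using hf2
        have := Sum.inl.inj (b.injective this)
        rw [Subtype.ext this]
      | .inl e1, .inr e2 =>
        have : b (.inl e1.1) = b (.inr e2.1) := by simpa [f, hlift] using hf2
        exact absurd (b.injective this) (by simp)
      | .inr e1, .inl e2 =>
        have : b (.inr e1.1) = b (.inl e2.1) := by simpa [f, hlift] using hf2
        exact absurd (b.injective this) (by simp)
      | .inr e1, .inr e2 =>
        have : b (.inr e1.1) = b (.inr e2.1) := by simpa [f, hlift] using hf2
        have := Sum.inr.inj (b.injective this)
        rw [Subtype.ext this]
    have hfsurj : Function.Surjective f := by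
      rintro ⟨v, i, hi⟩
      cases hs : b.symm ⟨v, i⟩ with
      | inl e =>
        have hbe : b (.inl e) = ⟨v, i⟩ := by rw [← hs, Equiv.apply_symm_apply]
        have he : e ≠ e0 := by
          have := congrArg (fun d : Σ v, I v => δ d.1 d.2) hbe
          simp only [hbl e] at this
          rw [this]; exact hi
        exact ⟨.inl ⟨e, he⟩, pack_congr _ _ _ _ hbe⟩
      | inr e =>
        have hbe : b (.inr e) = ⟨v, i⟩ := by rw [← hs, Equiv.apply_symm_apply]
        have he : e ≠ e0 := by
          have := congrArg (fun d : Σ v, I v => δ d.1 d.2) hbe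
          simp only [hbr e] at this
          rw [this]; exact hi
        exact ⟨.inr ⟨e, he⟩, pack_congr _ _ _ _ hbe⟩
    let b' : E' ⊕ E' ≃ Σ v, I' v := Equiv.ofBijective f ⟨hfinj, hfsurj⟩
    have hbl' : ∀ e : E', δ' (b' (.inl e)).1 (b' (.inl e)).2 = e := by
      intro e
      exact Subtype.ext (hbl e.1)
    have hbr' : ∀ e : E', δ' (b' (.inr e)).1 (b' (.inr e)).2 = e := by
      intro e
      exact Subtype.ext (hbr e.1)
    have hne' : ∀ e : E', (b' (.inl e)).1 ≠ (b' (.inr e)).1 := fun e => hne e.1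
    -- the reduced functions have the same ℓ²-norms
    have key : ∀ v, ∑' c : I' v → C, (x' v c) ^ (2:ℕ) = ∑' c : I v → C, (x v c) ^ (2:ℕ) := by
      intro v
      by_cases hv : ∀ i : I v, δ v i ≠ e0
      · let q : (I v → C) ≃ (I' v → C) :=
          { toFun := fun c => fun i => c i.1
            invFun := fun c => fun i => c ⟨i, hv i⟩
            left_inv := fun c => rfl
            right_inv := fun c => by
              funext i
              exact congrArg c (Subtype.ext rfl) }
        rw [← Equiv.tsum_eq q (fun c => (x' v c) ^ (2:ℕ))]
        refine tsum_congr (fun c => ?_)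
        have : x' v (q c) = x v c := by
          show (if hv' : ∀ i : I v, δ v i ≠ e0 then
              x v (fun i => q c ⟨i, hv' i⟩) else _) = x v c
          rw [dif_pos hv]
          rfl
        rw [this]
      · -- `v` carries the (unique) dart over `e0`
        push_neg at hv
        obtain ⟨istar, histar⟩ := hv
        have hv' : ¬ (∀ i : I v, δ v i ≠ e0) := fun hv2 => hv2 istar histar
        let gl : C × (I' v → C) ≃ (I v → C) :=
          { toFun := fun p => fun i => if h : δ v i = e0 then p.1 else p.2 ⟨i, h⟩
            invFun := fun c => (c istar, fun i => c i.1)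
            left_inv := fun p => by
              refine Prod.ext (by simp [histar]) ?_
              funext i
              simp [i.2]
            right_inv := fun c => by
              funext i
              by_cases h : δ v i = e0
              · show (if h' : δ v i = e0 then c istar else _) = c i
                rw [dif_pos h]
                exact congrArg c (huniq v istar i histar h)
              · show (if h' : δ v i = e0 then c istar else (fun j : {i : I v // δ v i ≠ e0} => c j.1) ⟨i, h'⟩) = c i
                rw [dif_neg h] }
        have hx' : ∀ c : I' v → C, (x' v c) ^ (2:ℕ) =
            ∑' c0 : C, (x v (gl (c0, c))) ^ (2:ℕ) := by
          intro c
          show ((if hv2 : ∀ i : I v, δ v i ≠ e0 then _ else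
            (∑' c0 : C, (x v (fun i => if h : δ v i = e0 then c0 else c ⟨i, h⟩)) ^ (2:ℕ)) ^ (2⁻¹ : ℝ)) ^ (2:ℕ) : ℝ≥0∞) = _
          rw [dif_neg hv', rpow_inv_sq']
          rfl
        calc ∑' c : I' v → C, (x' v c) ^ (2:ℕ)
            = ∑' (c : I' v → C) (c0 : C), (x v (gl (c0, c))) ^ (2:ℕ) :=
              tsum_congr hx'
          _ = ∑' p : (I' v → C) × C, (x v (gl (p.2, p.1))) ^ (2:ℕ) :=
              (ENNReal.tsum_prod' (f := fun p : (I' v → C) × C => (x v (gl (p.2, p.1))) ^ (2:ℕ))).symm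
          _ = ∑' c : I v → C, (x v c) ^ (2:ℕ) := by
              exact Equiv.tsum_eq ((Equiv.prodComm _ _).trans gl) (fun c => (x v c) ^ (2:ℕ))
    -- splitting a configuration into its value at `e0` and the rest
    let glue : C → (E' → C) → E → C := fun c0 ψ' e => if h : e = e0 then c0 else ψ' ⟨e, h⟩
    let eqE : (E → C) ≃ C × (E' → C) :=
      { toFun := fun ψ => (ψ e0, fun e => ψ e.1)
        invFun := fun p => glue p.1 p.2
        left_inv := fun ψ => by
          funext e
          show (if h : e = e0 then ψ e0 else ψ (⟨e, h⟩ : E').1) = ψ e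
          by_cases h : e = e0
          · rw [dif_pos h, h]
          · rw [dif_neg h]
        right_inv := fun p => by
          refine Prod.ext ?_ ?_
          · show (if h : e0 = e0 then p.1 else _) = p.1
            rw [dif_pos rfl]
          · funext e
            show (if h : (e:E) = e0 then p.1 else p.2 ⟨e.1, h⟩) = p.2 e
            rw [dif_neg e.2] }
    -- the inner Cauchy–Schwarz step
    have hstep : ∀ ψ' : E' → C,
        ∑' c0 : C, ∏ v, x v (fun i => glue c0 ψ' (δ v i)) ≤
          ∏ v, x' v (fun i => ψ' (δ' v i)) := by
      intro ψ'
      have hrest : ∀ v, v ≠ u → v ≠ w → ∀ c0 : C,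
          x v (fun i => glue c0 ψ' (δ v i)) = x' v (fun i => ψ' (δ' v i)) := by
        intro v hvu2 hvw2 c0
        have hv : ∀ i : I v, δ v i ≠ e0 := by
          intro i hi
          rcases hvert v i hi with h | h
          exacts [hvu2 h, hvw2 h]
        show _ = (if hv2 : ∀ i : I v, δ v i ≠ e0 then
            x v (fun i => (fun j => ψ' (δ' v j)) ⟨i, hv2 i⟩) else _)
        rw [dif_pos hv]
        refine congrArg (x v) (funext fun i => ?_)
        show (if h : δ v i = e0 then c0 else ψ' ⟨δ v i, h⟩) = ψ' (δ' v ⟨i, hv i⟩)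
        rw [dif_neg (hv i)]
      have hCSu : (∑' c0 : C, (x u (fun i => glue c0 ψ' (δ u i))) ^ (2:ℕ)) ^ (2⁻¹:ℝ) =
          x' u (fun i => ψ' (δ' u i)) := by
        show _ = (if hv2 : ∀ i : I u, δ u i ≠ e0 then _ else
          (∑' c0 : C, (x u (fun i => if h : δ u i = e0 then c0 else
            (fun j => ψ' (δ' u j)) ⟨i, h⟩)) ^ (2:ℕ)) ^ (2⁻¹:ℝ))
        rw [dif_neg hvu]
      have hCSw : (∑' c0 : C, (x w (fun i => glue c0 ψ' (δ w i))) ^ (2:ℕ)) ^ (2⁻¹:ℝ) =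
          x' w (fun i => ψ' (δ' w i)) := by
        show _ = (if hv2 : ∀ i : I w, δ w i ≠ e0 then _ else
          (∑' c0 : C, (x w (fun i => if h : δ w i = e0 then c0 else
            (fun j => ψ' (δ' w j)) ⟨i, h⟩)) ^ (2:ℕ)) ^ (2⁻¹:ℝ))
        rw [dif_neg hvw]
      have hwmem : w ∈ Finset.univ.erase u := Finset.mem_erase.mpr ⟨huw.symm, Finset.mem_univ w⟩
      calc ∑' c0 : C, ∏ v, x v (fun i => glue c0 ψ' (δ v i))
          = ∑' c0 : C, (x u (fun i => glue c0 ψ' (δ u i)) * x w (fun i => glue c0 ψ' (δ w i))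
              * ∏ v ∈ (Finset.univ.erase u).erase w, x' v (fun i => ψ' (δ' v i))) := by
            refine tsum_congr fun c0 => ?_
            rw [← Finset.mul_prod_erase Finset.univ _ (Finset.mem_univ u),
              ← Finset.mul_prod_erase (Finset.univ.erase u) _ hwmem, ← mul_assoc]
            congr 1
            refine Finset.prod_congr rfl fun v hv2 => ?_
            simp only [Finset.mem_erase] at hv2
            exact hrest v hv2.2.1 hv2.1 c0
        _ = (∑' c0 : C, x u (fun i => glue c0 ψ' (δ u i)) * x w (fun i => glue c0 ψ' (δ w i)))
              * ∏ v ∈ (Finset.univ.erase u).erase w, x' v (fun i => ψ' (δ' v i)) :=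
            ENNReal.tsum_mul_right
        _ ≤ ((∑' c0 : C, (x u (fun i => glue c0 ψ' (δ u i))) ^ (2:ℕ)) ^ (2⁻¹:ℝ)
              * (∑' c0 : C, (x w (fun i => glue c0 ψ' (δ w i))) ^ (2:ℕ)) ^ (2⁻¹:ℝ))
              * ∏ v ∈ (Finset.univ.erase u).erase w, x' v (fun i => ψ' (δ' v i)) :=
            mul_le_mul_left (tsum_cs' _ _) _
        _ = (x' u (fun i => ψ' (δ' u i)) * x' w (fun i => ψ' (δ' w i)))
              * ∏ v ∈ (Finset.univ.erase u).erase w, x' v (fun i => ψ' (δ' v i)) := by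
            rw [hCSu, hCSw]
        _ = ∏ v, x' v (fun i => ψ' (δ' v i)) := by
            rw [← Finset.mul_prod_erase Finset.univ _ (Finset.mem_univ u),
              ← Finset.mul_prod_erase (Finset.univ.erase u) _ hwmem, ← mul_assoc]
    -- assembling everything
    calc ∑' ψ : E → C, ∏ v, x v (fun i => ψ (δ v i))
        = ∑' p : C × (E' → C), ∏ v, x v (fun i => glue p.1 p.2 (δ v i)) :=
          (Equiv.tsum_eq eqE.symm (fun ψ : E → C => ∏ v, x v (fun i => ψ (δ v i)))).symm
      _ = ∑' (c0 : C) (ψ' : E' → C), ∏ v, x v (fun i => glue c0 ψ' (δ v i)) :=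
          ENNReal.tsum_prod'
      _ = ∑' (ψ' : E' → C) (c0 : C), ∏ v, x v (fun i => glue c0 ψ' (δ v i)) :=
          ENNReal.tsum_comm
      _ ≤ ∑' ψ' : E' → C, ∏ v, x' v (fun i => ψ' (δ' v i)) :=
          ENNReal.tsum_le_tsum hstep
      _ ≤ ∏ v, (∑' c : I' v → C, (x' v c) ^ (2:ℕ)) ^ (2⁻¹ : ℝ) :=
          ih E' V I' δ' x' b' hbl' hbr' hne' hcard'
      _ = ∏ v, (∑' c : I v → C, (x v c) ^ (2:ℕ)) ^ (2⁻¹ : ℝ) := by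
          exact Finset.prod_congr rfl fun v _ => by rw [key v]




/-- Tonelli/Fubini for a finite product of absolutely convergent sums:
`∑_{ψ : E → C} ∏_e f_e(ψ e) = ∏_e ∑_c f_e(c)`. -/
lemma pi_prod_tsum (C : Type) : ∀ (n : ℕ) (E : Type) [Fintype E] (f : E → C → ℝ),
    Fintype.card E ≤ n → (∀ e, Summable fun c => |f e c|) →
    Summable (fun ψ : E → C => |∏ e, f e (ψ e)|) ∧
    (∑' ψ : E → C, ∏ e, f e (ψ e)) = ∏ e, ∑' c, f e c := by
  have base : ∀ (E : Type) [Fintype E] [IsEmpty E] (f : E → C → ℝ),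
      Summable (fun ψ : E → C => |∏ e, f e (ψ e)|) ∧
      (∑' ψ : E → C, ∏ e, f e (ψ e)) = ∏ e, ∑' c, f e c := by
    intro E _ _ f
    haveI : Unique (E → C) := Pi.uniqueOfIsEmpty _
    constructor
    · exact (hasSum_single (f := fun ψ : E → C => |∏ e, f e (ψ e)|) default
        (fun ψ hψ => absurd (Subsingleton.elim ψ default) hψ)).summable
    · rw [tsum_eq_single (f := fun ψ : E → C => ∏ e, f e (ψ e)) default
        (fun ψ hψ => absurd (Subsingleton.elim ψ default) hψ)]
      simp
  intro n
  induction n with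
  | zero =>
    intro E _ f hcard hf
    haveI : IsEmpty E := Fintype.card_eq_zero_iff.mp (Nat.le_zero.mp hcard)
    exact base E f
  | succ n ih =>
    intro E _ f hcard hf
    rcases isEmpty_or_nonempty E with hE | hE
    · exact base E f
    obtain ⟨e0⟩ := hE
    classical
    let E' : Type := {e : E // e ≠ e0}
    have hcard' : Fintype.card E' ≤ n := by
      have hlt : Fintype.card E' < Fintype.card E :=
        Fintype.card_subtype_lt (p := fun e => e ≠ e0) (x := e0) (by simp)
      omega
    let f' : E' → C → ℝ := fun e c => f e.1 c
    obtain ⟨hS', htsum'⟩ := ih E' f' hcard' (fun e => hf e.1)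
    have prodsplit : ∀ (g : (e : E) → ℝ), ∏ e, g e = g e0 * ∏ e' : E', g e'.1 := by
      intro g
      rw [← Finset.mul_prod_erase Finset.univ _ (Finset.mem_univ e0)]
      congr 1
      exact Finset.prod_subtype (Finset.univ.erase e0) (by simp) g
    let eqE : (E → C) ≃ C × (E' → C) :=
      { toFun := fun ψ => (ψ e0, fun e => ψ e.1)
        invFun := fun p e => if h : e = e0 then p.1 else p.2 ⟨e, h⟩
        left_inv := fun ψ => by
          funext e
          show (if h : e = e0 then ψ e0 else ψ (⟨e, h⟩ : E').1) = ψ e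
          by_cases h : e = e0
          · rw [dif_pos h, h]
          · rw [dif_neg h]
        right_inv := fun p => by
          refine Prod.ext (by simp) ?_
          funext e
          simp [e.2] }
    have habs : Summable (fun z : C × (E' → C) =>
        |f e0 z.1| * |∏ e' : E', f' e' (z.2 e')|) := by
      refine summable_mul_of_summable_norm (f := fun c => |f e0 c|)
        (g := fun ψ' : E' → C => |∏ e' : E', f' e' (ψ' e')|) ?_ ?_
      · simpa only [Real.norm_eq_abs, abs_abs] using hf e0
      · simpa only [Real.norm_eq_abs, abs_abs] using hS'
    have hsummul : Summable (fun z : C × (E' → C) =>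
        f e0 z.1 * ∏ e' : E', f' e' (z.2 e')) := by
      refine summable_mul_of_summable_norm (f := fun c => f e0 c)
        (g := fun ψ' : E' → C => ∏ e' : E', f' e' (ψ' e')) ?_ ?_
      · simpa only [Real.norm_eq_abs] using hf e0
      · simpa only [Real.norm_eq_abs] using hS'
    constructor
    · have h1 : Summable ((fun z : C × (E' → C) =>
          |f e0 z.1| * |∏ e' : E', f' e' (z.2 e')|) ∘ eqE) := (eqE.summable_iff).mpr habs
      refine h1.congr (fun ψ => ?_)
      show |f e0 (ψ e0)| * |∏ e' : E', f' e' (ψ e'.1)| = _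
      rw [← abs_mul, ← prodsplit (fun e => f e (ψ e))]
    · have s1 : (∑' ψ : E → C, ∏ e, f e (ψ e))
          = ∑' ψ : E → C, (f e0 (ψ e0) * ∏ e' : E', f' e' (ψ e'.1)) :=
        tsum_congr (fun ψ => prodsplit (fun e => f e (ψ e)))
      have s2 : (∑' ψ : E → C, (f e0 (ψ e0) * ∏ e' : E', f' e' (ψ e'.1)))
          = ∑' z : C × (E' → C), f e0 z.1 * ∏ e' : E', f' e' (z.2 e') :=
        Equiv.tsum_eq eqE (fun z : C × (E' → C) => f e0 z.1 * ∏ e' : E', f' e' (z.2 e'))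
      have s3 : (∑' c, f e0 c) * (∑' ψ' : E' → C, ∏ e' : E', f' e' (ψ' e'))
          = ∑' z : C × (E' → C), f e0 z.1 * ∏ e' : E', f' e' (z.2 e') :=
        tsum_mul_tsum_of_summable_norm
          (by simpa only [Real.norm_eq_abs] using hf e0)
          (by simpa only [Real.norm_eq_abs] using hS')
      rw [s1, s2, ← s3, htsum', ← prodsplit (fun e => ∑' c, f e c)]

section GraphHelpers

variable {C : Type} {V : Type} [Fintype V] [DecidableEq V]
variable (F : SimpleGraph V) [DecidableRel F.Adj]
variable (δ : ∀ v : V, Fin (F.degree v) → F.edgeSet)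

/-- From an enumeration of incident edges we obtain a matching of `E ⊕ E` with the darts. -/
lemma exists_dart_equiv (hδ : IsEnum F δ) :
    ∃ b : (F.edgeSet ⊕ F.edgeSet) ≃ (Σ v : V, Fin (F.degree v)),
      (∀ e, δ (b (.inl e)).1 (b (.inl e)).2 = e) ∧
      (∀ e, δ (b (.inr e)).1 (b (.inr e)).2 = e) ∧
      (∀ e, (b (.inl e)).1 ≠ (b (.inr e)).1) := by
  classical
  have hout : ∀ z : Sym2 V, s(z.out.1, z.out.2) = z := fun z => z.out_eq
  have hmem_class : ∀ (z : Sym2 V) (v : V), v ∈ z → v = z.out.1 ∨ v = z.out.2 := by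
    intro z v hv
    rw [← hout z] at hv
    exact Sym2.mem_iff.mp hv
  have hu : ∀ e : F.edgeSet, (e : Sym2 V).out.1 ∈ (e : Sym2 V) := fun e => Sym2.out_fst_mem _
  have hw : ∀ e : F.edgeSet, (e : Sym2 V).out.2 ∈ (e : Sym2 V) := fun e => Sym2.out_snd_mem _
  have hne0 : ∀ e : F.edgeSet, (e : Sym2 V).out.1 ≠ (e : Sym2 V).out.2 := by
    intro e he
    have hdiag : ¬ (e : Sym2 V).IsDiag := F.not_isDiag_of_mem_edgeSet e.2
    have : ((e : Sym2 V).out.1, (e : Sym2 V).out.2).1 =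
        ((e : Sym2 V).out.1, (e : Sym2 V).out.2).2 := he
    exact hdiag (by rw [← hout (e : Sym2 V)]; exact (Sym2.mk_isDiag_iff).mpr this)
  have hidx : ∀ (v : V) (e : F.edgeSet), v ∈ (e : Sym2 V) → ∃ i, δ v i = e := by
    intro v e hv
    obtain ⟨i, hi⟩ := ((hδ v).2 e).mp hv
    exact ⟨i, hi⟩
  let du : F.edgeSet → Σ v : V, Fin (F.degree v) := fun e =>
    ⟨(e : Sym2 V).out.1, (hidx _ e (hu e)).choose⟩
  let dw : F.edgeSet → Σ v : V, Fin (F.degree v) := fun e =>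
    ⟨(e : Sym2 V).out.2, (hidx _ e (hw e)).choose⟩
  have hdu : ∀ e, δ (du e).1 (du e).2 = e := fun e => (hidx _ e (hu e)).choose_spec
  have hdw : ∀ e, δ (dw e).1 (dw e).2 = e := fun e => (hidx _ e (hw e)).choose_spec
  have hduw : ∀ e, (du e).1 ≠ (dw e).1 := fun e => hne0 e
  let f : F.edgeSet ⊕ F.edgeSet → Σ v : V, Fin (F.degree v) := Sum.elim du dw
  have hinj : Function.Injective f := by
    rintro (e1 | e1) (e2 | e2) hf
    · have : e1 = e2 := by
        rw [← hdu e1, ← hdu e2]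
        exact congrArg (fun d : Σ v : V, Fin (F.degree v) => δ d.1 d.2) hf
      rw [this]
    · exfalso
      have he : e1 = e2 := by
        rw [← hdu e1, ← hdw e2]
        exact congrArg (fun d : Σ v : V, Fin (F.degree v) => δ d.1 d.2) hf
      subst he
      exact hduw e1 (congrArg Sigma.fst hf)
    · exfalso
      have he : e1 = e2 := by
        rw [← hdw e1, ← hdu e2]
        exact congrArg (fun d : Σ v : V, Fin (F.degree v) => δ d.1 d.2) hf
      subst he
      exact hduw e1 (congrArg Sigma.fst hf).symm
    · have : e1 = e2 := by
        rw [← hdw e1, ← hdw e2]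
        exact congrArg (fun d : Σ v : V, Fin (F.degree v) => δ d.1 d.2) hf
      rw [this]
  have dart_ext : ∀ (d d' : Σ v : V, Fin (F.degree v)), d.1 = d'.1 →
      δ d.1 d.2 = δ d'.1 d'.2 → d = d' := by
    rintro ⟨v1, i1⟩ ⟨v2, i2⟩ h1 h2
    dsimp only at h1
    subst h1
    dsimp only at h2
    rw [(hδ v1).1 h2]
  have hsurj : Function.Surjective f := by
    rintro ⟨v, i⟩
    have hv : v ∈ ((δ v i : F.edgeSet) : Sym2 V) := ((hδ v).2 (δ v i)).mpr ⟨i, rfl⟩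
    rcases hmem_class ((δ v i : F.edgeSet) : Sym2 V) v hv with h | h
    · exact ⟨.inl (δ v i), dart_ext (du (δ v i)) ⟨v, i⟩ h.symm (by rw [hdu (δ v i)])⟩
    · exact ⟨.inr (δ v i), dart_ext (dw (δ v i)) ⟨v, i⟩ h.symm (by rw [hdw (δ v i)])⟩
  exact ⟨Equiv.ofBijective f ⟨hinj, hsurj⟩, fun e => hdu e, fun e => hdw e, fun e => hduw e⟩

/-- The `ℓ²`-norm of an element of `Hk C k`, as an `ℝ≥0∞`-valued sum of squares. -/
lemma lp_tsum_sq_eq {C : Type} (k : ℕ) (y : Hk C k) :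
    ∑' c : Fin k → C, ((‖y c‖₊ : ℝ≥0∞)) ^ (2:ℕ) = (‖y‖₊ : ℝ≥0∞) ^ (2:ℕ) := by
  have htr : (2:ℝ≥0∞).toReal = 2 := by norm_num
  have hsum : Summable fun c : Fin k → C => ‖y c‖ ^ (2:ℝ) := by
    have := (lp.memℓp y).summable (p := 2) (by norm_num)
    rwa [htr] at this
  have hsum' : Summable fun c : Fin k → C => ‖y c‖ ^ (2:ℕ) := by
    refine hsum.congr fun c => ?_
    rw [← Real.rpow_natCast]; norm_num
  have h1 : ∑' c : Fin k → C, ((‖y c‖₊ : ℝ≥0∞)) ^ (2:ℕ)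
      = ENNReal.ofReal (∑' c : Fin k → C, ‖y c‖ ^ (2:ℕ)) := by
    rw [ENNReal.ofReal_tsum_of_nonneg (fun c => by positivity) hsum']
    exact tsum_congr fun c => by
      rw [ENNReal.ofReal_pow (norm_nonneg _), ofReal_norm, enorm_eq_nnnorm]
  have h2 : ∑' c : Fin k → C, ‖y c‖ ^ (2:ℕ) = ‖y‖ ^ (2:ℕ) := by
    have h3 := lp.norm_rpow_eq_tsum (p := 2) (by norm_num) y
    rw [htr] at h3
    calc ∑' c : Fin k → C, ‖y c‖ ^ (2:ℕ)
        = ∑' c : Fin k → C, ‖y c‖ ^ (2:ℝ) := tsum_congr fun c => by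
          rw [← Real.rpow_natCast]; norm_num
      _ = ‖y‖ ^ (2:ℝ) := h3.symm
      _ = ‖y‖ ^ (2:ℕ) := by rw [← Real.rpow_natCast]; norm_num
  rw [h1, h2, ENNReal.ofReal_pow (norm_nonneg _), ofReal_norm, enorm_eq_nnnorm]

variable {F} {δ}

/-- The fundamental `ℓ²` bound on the partition function. -/
lemma tsum_nnnorm_piF_le {C : Type} (b : (F.edgeSet ⊕ F.edgeSet) ≃ (Σ v : V, Fin (F.degree v)))
    (hbl : ∀ e, δ (b (.inl e)).1 (b (.inl e)).2 = e)
    (hbr : ∀ e, δ (b (.inr e)).1 (b (.inr e)).2 = e)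
    (hne : ∀ e, (b (.inl e)).1 ≠ (b (.inr e)).1)
    (x : ∀ v : V, Hk C (F.degree v)) :
    ∑' ψ : F.edgeSet → C, (‖∏ v, x v (fun i => ψ (δ v i))‖₊ : ℝ≥0∞) ≤
      ∏ v, (‖x v‖₊ : ℝ≥0∞) := by
  have hcore := core C (Fintype.card F.edgeSet) F.edgeSet V (fun v => Fin (F.degree v)) δ
    (fun v c => (‖x v c‖₊ : ℝ≥0∞)) b hbl hbr hne le_rfl
  calc ∑' ψ : F.edgeSet → C, (‖∏ v, x v (fun i => ψ (δ v i))‖₊ : ℝ≥0∞)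
      = ∑' ψ : F.edgeSet → C, ∏ v, (‖x v (fun i => ψ (δ v i))‖₊ : ℝ≥0∞) := by
        refine tsum_congr fun ψ => ?_
        rw [nnnorm_prod, ENNReal.coe_finset_prod]
    _ ≤ ∏ v, (∑' c : Fin (F.degree v) → C, ((‖x v c‖₊ : ℝ≥0∞)) ^ (2:ℕ)) ^ (2⁻¹:ℝ) := hcore
    _ = ∏ v, (‖x v‖₊ : ℝ≥0∞) := Finset.prod_congr rfl fun v _ => by
        rw [lp_tsum_sq_eq, sq_rpow_inv']

/-- Summability of the partition function. -/
lemma summable_piF {C : Type} (b : (F.edgeSet ⊕ F.edgeSet) ≃ (Σ v : V, Fin (F.degree v)))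
    (hbl : ∀ e, δ (b (.inl e)).1 (b (.inl e)).2 = e)
    (hbr : ∀ e, δ (b (.inr e)).1 (b (.inr e)).2 = e)
    (hne : ∀ e, (b (.inl e)).1 ≠ (b (.inr e)).1)
    (x : ∀ v : V, Hk C (F.degree v)) :
    Summable fun ψ : F.edgeSet → C => ∏ v, x v (fun i => ψ (δ v i)) := by
  refine Summable.of_nnnorm ?_
  rw [← ENNReal.tsum_coe_ne_top_iff_summable]
  refine ne_top_of_le_ne_top ?_ (tsum_nnnorm_piF_le b hbl hbr hne x)
  rw [← ENNReal.coe_finset_prod]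
  exact ENNReal.coe_ne_top

/-- The real bound `‖π_F(x)‖ ≤ ∏ v ‖x v‖`. -/
lemma norm_tsum_piF_le {C : Type} (b : (F.edgeSet ⊕ F.edgeSet) ≃ (Σ v : V, Fin (F.degree v)))
    (hbl : ∀ e, δ (b (.inl e)).1 (b (.inl e)).2 = e)
    (hbr : ∀ e, δ (b (.inr e)).1 (b (.inr e)).2 = e)
    (hne : ∀ e, (b (.inl e)).1 ≠ (b (.inr e)).1)
    (x : ∀ v : V, Hk C (F.degree v)) :
    ‖∑' ψ : F.edgeSet → C, ∏ v, x v (fun i => ψ (δ v i))‖ ≤ ∏ v, ‖x v‖ := by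
  have hnn : Summable fun ψ : F.edgeSet → C => ‖∏ v, x v (fun i => ψ (δ v i))‖₊ := by
    rw [← ENNReal.tsum_coe_ne_top_iff_summable]
    refine ne_top_of_le_ne_top ?_ (tsum_nnnorm_piF_le b hbl hbr hne x)
    rw [← ENNReal.coe_finset_prod]
    exact ENNReal.coe_ne_top
  set S : ℝ≥0 := ∑' ψ : F.edgeSet → C, ‖∏ v, x v (fun i => ψ (δ v i))‖₊ with hS
  have hle : S ≤ ∏ v, ‖x v‖₊ := by
    rw [← ENNReal.coe_le_coe, hS, ENNReal.coe_tsum hnn, ENNReal.coe_finset_prod]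
    exact tsum_nnnorm_piF_le b hbl hbr hne x
  calc ‖∑' ψ : F.edgeSet → C, ∏ v, x v (fun i => ψ (δ v i))‖
      ≤ ∑' ψ : F.edgeSet → C, ‖∏ v, x v (fun i => ψ (δ v i))‖ :=
        norm_tsum_le_tsum_norm (by simpa only [coe_nnnorm] using NNReal.summable_coe.mpr hnn)
    _ = (S : ℝ) := by
        rw [hS, NNReal.coe_tsum]
        exact tsum_congr fun ψ => (coe_nnnorm _).symm
    _ ≤ ((∏ v, ‖x v‖₊ : ℝ≥0) : ℝ) := by exact_mod_cast hle
    _ = ∏ v, ‖x v‖ := by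
        rw [NNReal.coe_prod]
        exact Finset.prod_congr rfl fun v _ => coe_nnnorm _

/-- `lp.single` on a product index is an elementary tensor of `lp.single`s. -/
lemma lp_single_tensor {C : Type} {k : ℕ} [DecidableEq (Fin k → C)] [DecidableEq C]
    (a d : Fin k → C) :
    (lp.single 2 a (1:ℝ) : Hk C k) d = ∏ i, (lp.single 2 (a i) (1:ℝ) : l2 C) (d i) := by
  by_cases h : d = a
  · subst h
    rw [lp.single_apply_self (E := fun _ : Fin k → C => ℝ) 2 d (1:ℝ)]
    exact (Finset.prod_eq_one fun i _ =>
      lp.single_apply_self (E := fun _ : C => ℝ) 2 (d i) (1:ℝ)).symm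
  · rw [lp.single_apply_ne (E := fun _ : Fin k → C => ℝ) 2 a (1:ℝ) h]
    have : ∃ i, d i ≠ a i := by
      by_contra hc
      push_neg at hc
      exact h (funext hc)
    obtain ⟨i, hi⟩ := this
    exact (Finset.prod_eq_zero (Finset.mem_univ i)
      (lp.single_apply_ne (E := fun _ : C => ℝ) 2 (a i) (1:ℝ) hi)).symm

/-- Evaluation of the partition function on elementary tensors: it is the product over
edges of the inner products of the two vectors attached to the darts of that edge. -/
lemma piF_elem {C : Type} (b : (F.edgeSet ⊕ F.edgeSet) ≃ (Σ v : V, Fin (F.degree v)))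
    (hbl : ∀ e, δ (b (.inl e)).1 (b (.inl e)).2 = e)
    (hbr : ∀ e, δ (b (.inr e)).1 (b (.inr e)).2 = e)
    (hne : ∀ e, (b (.inl e)).1 ≠ (b (.inr e)).1)
    (r : ∀ v : V, Fin (F.degree v) → l2 C) (x : ∀ v : V, Hk C (F.degree v))
    (hx : ∀ (v : V) (d : Fin (F.degree v) → C), x v d = ∏ i, r v i (d i)) :
    (∑' ψ : F.edgeSet → C, ∏ v, x v (fun i => ψ (δ v i))) =
      ∏ e : F.edgeSet,
        ⟪r (b (.inl e)).1 (b (.inl e)).2, r (b (.inr e)).1 (b (.inr e)).2⟫_ℝ := by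
  classical
  set f : F.edgeSet → C → ℝ := fun e c =>
    (r (b (.inl e)).1 (b (.inl e)).2) c * (r (b (.inr e)).1 (b (.inr e)).2) c with hf_def
  have h22 : ((2:ℝ≥0∞).toReal).HolderConjugate ((2:ℝ≥0∞).toReal) := by
    rw [ENNReal.toReal_ofNat]
    exact Real.HolderConjugate.two_two
  have hf : ∀ e, Summable fun c => |f e c| := by
    intro e
    have hmul := lp.summable_mul h22 (r (b (.inl e)).1 (b (.inl e)).2)
      (r (b (.inr e)).1 (b (.inr e)).2)
    refine hmul.congr fun c => ?_
    rw [Real.norm_eq_abs, Real.norm_eq_abs, ← abs_mul]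
  have hinner : ∀ (y z : l2 C), ⟪y, z⟫_ℝ = ∑' c, y c * z c := by
    intro y z
    rw [lp.inner_eq_tsum]
    exact tsum_congr fun c => by simp [RCLike.inner_apply, mul_comm]
  have hpoint : ∀ ψ : F.edgeSet → C,
      ∏ v, x v (fun i => ψ (δ v i)) = ∏ e, f e (ψ e) := by
    intro ψ
    calc ∏ v, x v (fun i => ψ (δ v i))
        = ∏ v, ∏ i, r v i (ψ (δ v i)) := Finset.prod_congr rfl fun v _ => hx v _
      _ = ∏ d : Σ v : V, Fin (F.degree v), r d.1 d.2 (ψ (δ d.1 d.2)) := by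
          rw [Finset.prod_sigma' Finset.univ (fun _ => Finset.univ)
            (fun v i => r v i (ψ (δ v i))), Finset.univ_sigma_univ]
      _ = ∏ s : F.edgeSet ⊕ F.edgeSet,
            r (b s).1 (b s).2 (ψ (δ (b s).1 (b s).2)) :=
          (Equiv.prod_comp b fun d : Σ v : V, Fin (F.degree v) =>
            r d.1 d.2 (ψ (δ d.1 d.2))).symm
      _ = ∏ e, f e (ψ e) := by
          rw [Fintype.prod_sum_type, ← Finset.prod_mul_distrib]
          exact Finset.prod_congr rfl fun e _ => by rw [hbl e, hbr e]
  rw [tsum_congr hpoint,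
    (pi_prod_tsum C (Fintype.card F.edgeSet) F.edgeSet f le_rfl hf).2]
  exact Finset.prod_congr rfl fun e _ => (hinner _ _).symm

end GraphHelpers

/-- Splitting off one factor of the vertex product after updating one coordinate. -/
lemma prod_update_piF {C V : Type} [Fintype V] [DecidableEq V]
    (F : SimpleGraph V) [DecidableRel F.Adj] (δ : ∀ v : V, Fin (F.degree v) → F.edgeSet)
    (x : ∀ v : V, Hk C (F.degree v)) (v : V) (y : Hk C (F.degree v)) (ψ : F.edgeSet → C) :
    ∏ v', Function.update x v y v' (fun i => ψ (δ v' i)) =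
      y (fun i => ψ (δ v i)) *
        ∏ v' ∈ Finset.univ.erase v, x v' (fun i => ψ (δ v' i)) := by
  rw [← Finset.mul_prod_erase Finset.univ _ (Finset.mem_univ v)]
  congr 1
  · rw [Function.update_self]
  · refine Finset.prod_congr rfl fun v' hv' => ?_
    rw [Function.update_of_ne (Finset.mem_erase.mp hv').1]

/-- The partition function is `O(H)`-invariant: for every `g ∈ O(H)`,
every `h = (h_k)_k ∈ ∏_{k∈ℕ} B_k` and every finite simple graph `F`,
`π(g·h)(F) = π(h)(F)`, where `g·h = (g·h_k)_k` via the natural tensor-power action of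
`O(H)` on each `H_k`.  (Partition function values are expressed via `π_F` with an
arbitrary enumeration `δ` of the incident edges.) -/
theorem stmt15 (C : Type)
    (act : (l2 C ≃ₗᵢ[ℝ] l2 C) → ∀ k : ℕ, Hk C k ≃ₗᵢ[ℝ] Hk C k)
    (hact : IsTensorPowerAction act)
    (g : l2 C ≃ₗᵢ[ℝ] l2 C)
    (h : ∀ k : ℕ, Hk C k) (hB : ∀ k, h k ∈ Bk C k)
    {V : Type} [Fintype V] [DecidableEq V] (F : SimpleGraph V) [DecidableRel F.Adj]
    (δ : ∀ v : V, Fin (F.degree v) → F.edgeSet) (hδ : IsEnum F δ) :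
    piF F δ (fun v => act g (F.degree v) (h (F.degree v))) =
      piF F δ (fun v => h (F.degree v)) := by
  classical
  obtain ⟨b, hbl, hbr, hne⟩ := exists_dart_equiv F δ hδ
  have hsum : ∀ x : ∀ v : V, Hk C (F.degree v),
      Summable fun ψ : F.edgeSet → C => ∏ v, x v (fun i => ψ (δ v i)) :=
    fun x => summable_piF b hbl hbr hne x
  let P : MultilinearMap ℝ (fun v : V => Hk C (F.degree v)) ℝ :=
    { toFun := fun x => ∑' ψ : F.edgeSet → C, ∏ v, x v (fun i => ψ (δ v i))
      map_update_add' := by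
        intro dec m i y1 y2
        have h1 : (∑' ψ : F.edgeSet → C,
            ∏ v, Function.update m i (y1 + y2) v (fun j => ψ (δ v j))) =
            ∑' ψ : F.edgeSet → C,
              ((∏ v, Function.update m i y1 v (fun j => ψ (δ v j))) +
               (∏ v, Function.update m i y2 v (fun j => ψ (δ v j)))) := by
          refine tsum_congr fun ψ => ?_
          simp only [prod_update_piF F δ, lp.coeFn_add, Pi.add_apply, add_mul]
        exact h1.trans (Summable.tsum_add (hsum (Function.update m i y1)) (hsum (Function.update m i y2)))
      map_update_smul' := by
        intro dec m i c y
        have h1 : (∑' ψ : F.edgeSet → C,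
            ∏ v, Function.update m i (c • y) v (fun j => ψ (δ v j))) =
            ∑' ψ : F.edgeSet → C,
              c * ∏ v, Function.update m i y v (fun j => ψ (δ v j)) := by
          refine tsum_congr fun ψ => ?_
          simp only [prod_update_piF F δ, lp.coeFn_smul, Pi.smul_apply, smul_eq_mul, mul_assoc]
        have h2 : (∑' ψ : F.edgeSet → C,
            c * ∏ v, Function.update m i y v (fun j => ψ (δ v j))) =
            c * ∑' ψ : F.edgeSet → C, ∏ v, Function.update m i y v (fun j => ψ (δ v j)) :=
          tsum_mul_left
        exact (h1.trans h2).trans (smul_eq_mul ..).symm }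
  have Pbound : ∀ x : ∀ v : V, Hk C (F.degree v), ‖P x‖ ≤ 1 * ∏ v, ‖x v‖ := fun x => by
    rw [one_mul]
    exact norm_tsum_piF_le b hbl hbr hne x
  let Pc : ContinuousMultilinearMap ℝ (fun v : V => Hk C (F.degree v)) ℝ :=
    P.mkContinuous 1 Pbound
  let G : ∀ v : V, Hk C (F.degree v) →L[ℝ] Hk C (F.degree v) :=
    fun v => (act g (F.degree v)).toLinearIsometry.toContinuousLinearMap
  let D : ContinuousMultilinearMap ℝ (fun v : V => Hk C (F.degree v)) ℝ :=
    Pc.compContinuousLinearMap G - Pc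
  have hPc : ∀ x : ∀ v : V, Hk C (F.degree v),
      Pc x = ∑' ψ : F.edgeSet → C, ∏ v, x v (fun i => ψ (δ v i)) := fun x => rfl
  have hD : ∀ x : ∀ v : V, Hk C (F.degree v),
      D x = Pc (fun v => act g (F.degree v) (x v)) - Pc x := fun x => rfl
  -- `D` vanishes on tuples of basis vectors
  have hbasis : ∀ cc : ∀ v : V, Fin (F.degree v) → C,
      D (fun v => (lp.single 2 (cc v) (1:ℝ) : Hk C (F.degree v))) = 0 := by
    intro cc
    rw [hD, sub_eq_zero, hPc, hPc]
    have h1 := piF_elem b hbl hbr hne (fun v i => (lp.single 2 (cc v i) (1:ℝ) : l2 C))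
      (fun v => (lp.single 2 (cc v) (1:ℝ) : Hk C (F.degree v)))
      (fun v d => lp_single_tensor (cc v) d)
    have h2 := piF_elem b hbl hbr hne (fun v i => g (lp.single 2 (cc v i) (1:ℝ) : l2 C))
      (fun v => act g (F.degree v) (lp.single 2 (cc v) (1:ℝ) : Hk C (F.degree v)))
      (fun v d => hact g (F.degree v) (fun i => (lp.single 2 (cc v i) (1:ℝ) : l2 C))
        (lp.single 2 (cc v) (1:ℝ) : Hk C (F.degree v)) (fun c => lp_single_tensor (cc v) c) d)
    rw [h1, h2]
    exact Finset.prod_congr rfl fun e _ => g.inner_map_map _ _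
  -- `D` vanishes on tuples of finitely supported vectors
  have hfin : ∀ x : ∀ v : V, Hk C (F.degree v),
      (∀ v, ∃ (s : Finset (Fin (F.degree v) → C)) (aa : (Fin (F.degree v) → C) → ℝ),
        x v = ∑ c ∈ s, lp.single 2 c (aa c)) → D x = 0 := by
    intro x hx
    choose s aa hxa using hx
    have hx' : x = fun v => ∑ c ∈ s v, (lp.single 2 c (aa v c) : Hk C (F.degree v)) :=
      funext hxa
    rw [hx']
    have hms := MultilinearMap.map_sum_finset D.toMultilinearMap
      (fun v c => (lp.single 2 c (aa v c) : Hk C (F.degree v))) s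
    rw [show (D.toMultilinearMap : (∀ v : V, Hk C (F.degree v)) → ℝ) = ⇑D from rfl] at hms
    rw [hms]
    refine Finset.sum_eq_zero fun r _ => ?_
    have hsingle : ∀ v : V, (lp.single 2 (r v) (aa v (r v)) : Hk C (F.degree v)) =
        aa v (r v) • (lp.single 2 (r v) (1:ℝ) : Hk C (F.degree v)) := by
      intro v
      rw [← lp.single_smul, smul_eq_mul, mul_one]
    have : (fun v => (lp.single 2 (r v) (aa v (r v)) : Hk C (F.degree v))) =
        fun v => aa v (r v) • (lp.single 2 (r v) (1:ℝ) : Hk C (F.degree v)) :=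
      funext hsingle
    rw [this]
    have hms2 := MultilinearMap.map_smul_univ D.toMultilinearMap (fun v => aa v (r v))
      (fun v => (lp.single 2 (r v) (1:ℝ) : Hk C (F.degree v)))
    rw [show (D.toMultilinearMap : (∀ v : V, Hk C (F.degree v)) → ℝ) = ⇑D from rfl] at hms2
    rw [hms2, hbasis r, smul_zero]
  -- by density, `D` vanishes everywhere
  have hstep : ∀ S : Finset V, ∀ x : ∀ v : V, Hk C (F.degree v),
      (∀ v ∉ S, ∃ (s : Finset (Fin (F.degree v) → C)) (aa : (Fin (F.degree v) → C) → ℝ),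
        x v = ∑ c ∈ s, lp.single 2 c (aa c)) → D x = 0 := by
    intro S
    induction S using Finset.induction_on with
    | empty => exact fun x hx => hfin x (fun v => hx v (Finset.notMem_empty v))
    | @insert a S ha ih =>
      intro x hx
      have hcont : Continuous fun y : Hk C (F.degree a) => D (Function.update x a y) := by
        refine D.coe_continuous.comp ?_
        refine continuous_pi fun v => ?_
        by_cases hv : v = a
        · subst hv
          simp only [Function.update_self]
          exact continuous_id
        · simp only [Function.update_of_ne hv]
          exact continuous_const
      have hclosed : IsClosed {y : Hk C (F.degree a) | D (Function.update x a y) = 0} :=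
        isClosed_eq hcont continuous_const
      have hy : ∀ y : Hk C (F.degree a),
          (∃ (s : Finset (Fin (F.degree a) → C)) (aa : (Fin (F.degree a) → C) → ℝ),
            y = ∑ c ∈ s, lp.single 2 c (aa c)) → D (Function.update x a y) = 0 := by
        intro y hy0
        refine ih (Function.update x a y) fun v hv => ?_
        by_cases hva : v = a
        · subst hva
          rw [Function.update_self]
          exact hy0
        · rw [Function.update_of_ne hva]
          exact hx v (fun hmem => hv ((Finset.mem_insert.mp hmem).resolve_left hva))
      have hmem0 : D (Function.update x a (x a)) = 0 := by
        have hlim : HasSum (fun c : Fin (F.degree a) → C =>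
            (lp.single 2 c ((x a) c) : Hk C (F.degree a))) (x a) :=
          lp.hasSum_single (by norm_num) (x a)
        exact hclosed.mem_of_tendsto hlim
          (Filter.Eventually.of_forall fun sf => hy _ ⟨sf, fun c => (x a) c, rfl⟩)
      rwa [Function.update_eq_self] at hmem0
  have hzero : D (fun v => h (F.degree v)) = 0 :=
    hstep Finset.univ (fun v => h (F.degree v))
      (fun v hv => absurd (Finset.mem_univ v) hv)
  rw [hD, sub_eq_zero, hPc, hPc] at hzero
  exact hzero
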